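/- For two n-qubit Pauli error operators E₁, E₂ with GF(4)-images e₁, e₂, one has Tr(E₁E₂E₁E₂) = (−1)^{e₁∗e₂} · 2^n, where ∗ is the trace-symplectic inner product over GF(4). -/

import Mathlib

open Matrix

noncomputable def σx : Matrix (Fin 2) (Fin 2) ℂ := !![0, 1; 1, 0]
noncomputable def σz : Matrix (Fin 2) (Fin 2) ℂ := !![1, 0; 0, -1]
noncomputable def σy : Matrix (Fin 2) (Fin 2) ℂ := !![0, -Complex.I; Complex.I, 0]

noncomputable def tensorProd (n : ℕ) (τ : Fin n → Matrix (Fin 2) (Fin 2) ℂ) :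
    Matrix (Fin n → Fin 2) (Fin n → Fin 2) ℂ :=
  Matrix.of fun x y => ∏ i, τ i (x i) (y i)

/-- GF(4), the field with four elements. -/
abbrev GF4 := GaloisField 2 2

open scoped Classical in
/-- The inverse of the bijection `φ̄`: it sends `0 ↦ I₂`, `1 ↦ σx`, `ω ↦ σz`, `ω² ↦ σy`. -/
noncomputable def pauliOf (ω : GF4) (a : GF4) : Matrix (Fin 2) (Fin 2) ℂ :=
  if a = 0 then 1 else if a = 1 then σx else if a = ω then σz else σy

/-- The trace-symplectic pairing `u ∗ v = Σ_i (v_i u_i² + v_i² u_i) = Σ_i tr(v_i ū_i)`,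
taking values in GF(2) ⊆ GF(4). -/
noncomputable def sympPair {n : ℕ} (u v : Fin n → GF4) : GF4 :=
  ∑ i, (v i * (u i) ^ 2 + (v i) ^ 2 * u i)

/- ### Auxiliary lemmas -/

lemma tensorProd_mul (n : ℕ) (τ σ : Fin n → Matrix (Fin 2) (Fin 2) ℂ) :
    tensorProd n τ * tensorProd n σ = tensorProd n (fun i => τ i * σ i) := by
  ext x y
  simp only [tensorProd, Matrix.mul_apply, Matrix.of_apply]
  rw [Finset.prod_univ_sum, Fintype.piFinset_univ]
  exact Finset.sum_congr rfl fun z _ => (Finset.prod_mul_distrib).symm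

lemma tensorProd_trace (n : ℕ) (τ : Fin n → Matrix (Fin 2) (Fin 2) ℂ) :
    (tensorProd n τ).trace = ∏ i, (τ i).trace := by
  simp only [Matrix.trace, Matrix.diag, tensorProd, Matrix.of_apply]
  rw [Finset.prod_univ_sum, Fintype.piFinset_univ]

lemma gf4_two : (2 : GF4) = 0 := by simpa using CharP.cast_eq_zero GF4 2

noncomputable instance : Fintype GF4 := Fintype.ofFinite _

lemma gf4_card : Fintype.card GF4 = 4 := by
  have := GaloisField.card 2 2 (by norm_num)
  simpa [Nat.card_eq_fintype_card] using this

lemma gf4_pow4 (a : GF4) : a ^ 4 = a := by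
  rw [← gf4_card]; exact FiniteField.pow_card a

lemma gf4_cases (ω : GF4) (hω : ω ^ 2 = ω + 1) (a : GF4) :
    a = 0 ∨ a = 1 ∨ a = ω ∨ a = ω + 1 := by
  have h2 := gf4_two
  have h4 := gf4_pow4 a
  have hp : a * (a + 1) * ((a + ω) * (a + (ω + 1))) = 0 := by
    linear_combination h4 + (a ^ 2 + a) * hω +
      ((ω + 1) * a ^ 3 + (2 * ω + 1) * a ^ 2 + (ω + 1) * a) * h2
  rcases mul_eq_zero.mp hp with hp | hp
  · rcases mul_eq_zero.mp hp with hp | hp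
    · exact Or.inl hp
    · exact Or.inr (Or.inl (by linear_combination hp - h2))
  · rcases mul_eq_zero.mp hp with hp | hp
    · exact Or.inr (Or.inr (Or.inl (by linear_combination hp - ω * h2)))
    · exact Or.inr (Or.inr (Or.inr (by linear_combination hp - (ω + 1) * h2)))

section omega_facts
variable (ω : GF4) (hω : ω ^ 2 = ω + 1)
include hω

lemma gf4_omega_ne_zero : ω ≠ 0 := by
  intro h; subst h
  exact one_ne_zero (α := GF4) (by linear_combination -hω)

lemma gf4_omega_ne_one : ω ≠ 1 := by
  intro h; subst h
  exact one_ne_zero (α := GF4) (by linear_combination -hω)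

omit hω in
lemma pauliOf_zero : pauliOf ω 0 = 1 := by simp [pauliOf]

omit hω in
lemma pauliOf_one : pauliOf ω 1 = σx := by simp [pauliOf]

lemma pauliOf_omega : pauliOf ω ω = σz := by
  simp [pauliOf, gf4_omega_ne_zero ω hω, gf4_omega_ne_one ω hω]

lemma pauliOf_omega1 : pauliOf ω (ω + 1) = σy := by
  have h0 : ω + 1 ≠ 0 := by
    intro h; exact gf4_omega_ne_one ω hω (by linear_combination h - gf4_two)
  have h1 : ω + 1 ≠ 1 := by
    intro h; exact gf4_omega_ne_zero ω hω (by linear_combination h)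
  have h2 : ω + 1 ≠ ω := by
    intro h; exact one_ne_zero (α := GF4) (by linear_combination h)
  simp [pauliOf, h0, h1, h2]

end omega_facts

open scoped Classical in
lemma qubit_trace (ω : GF4) (hω : ω ^ 2 = ω + 1) (a b : GF4) :
    (pauliOf ω a * pauliOf ω b * pauliOf ω a * pauliOf ω b).trace =
      (if b * a ^ 2 + b ^ 2 * a = 0 then (1 : ℂ) else -1) * 2 := by
  have h2 := gf4_two
  have hone : (1 : GF4) ≠ 0 := one_ne_zero
  rcases gf4_cases ω hω a with ha | ha | ha | ha <;>
    rcases gf4_cases ω hω b with hb | hb | hb | hb <;>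
    rw [ha, hb] <;>
    simp only [pauliOf_zero ω, pauliOf_one ω, pauliOf_omega ω hω, pauliOf_omega1 ω hω]
  -- a = 0 cases
  · rw [if_pos (by ring)]
    norm_num [σx, σy, σz, Matrix.one_fin_two, Matrix.mul_fin_two, Matrix.trace_fin_two_of]
  · rw [if_pos (by ring)]
    norm_num [σx, σy, σz, Matrix.one_fin_two, Matrix.mul_fin_two, Matrix.trace_fin_two_of]
  · rw [if_pos (by ring)]
    norm_num [σx, σy, σz, Matrix.one_fin_two, Matrix.mul_fin_two, Matrix.trace_fin_two_of]
  · rw [if_pos (by ring)]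
    norm_num [σx, σy, σz, Matrix.one_fin_two, Matrix.mul_fin_two, Matrix.trace_fin_two_of,
      Complex.I_mul_I]
  -- a = 1 cases
  · rw [if_pos (by ring)]
    norm_num [σx, σy, σz, Matrix.one_fin_two, Matrix.mul_fin_two, Matrix.trace_fin_two_of]
  · rw [if_pos (by linear_combination 1 * h2)]
    norm_num [σx, σy, σz, Matrix.one_fin_two, Matrix.mul_fin_two, Matrix.trace_fin_two_of]
  · rw [show ω * 1 ^ 2 + ω ^ 2 * 1 = (1 : GF4) by linear_combination hω + ω * h2, if_neg hone]
    norm_num [σx, σy, σz, Matrix.one_fin_two, Matrix.mul_fin_two, Matrix.trace_fin_two_of]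
  · rw [show (ω + 1) * 1 ^ 2 + (ω + 1) ^ 2 * 1 = (1 : GF4) by
      linear_combination hω + (2 * ω + 1) * h2, if_neg hone]
    norm_num [σx, σy, σz, Matrix.one_fin_two, Matrix.mul_fin_two, Matrix.trace_fin_two_of,
      Complex.I_mul_I]
  -- a = ω cases
  · rw [if_pos (by ring)]
    norm_num [σx, σy, σz, Matrix.one_fin_two, Matrix.mul_fin_two, Matrix.trace_fin_two_of]
  · rw [show 1 * ω ^ 2 + 1 ^ 2 * ω = (1 : GF4) by linear_combination hω + ω * h2, if_neg hone]
    norm_num [σx, σy, σz, Matrix.one_fin_two, Matrix.mul_fin_two, Matrix.trace_fin_two_of]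
  · rw [if_pos (by linear_combination ω ^ 3 * h2)]
    norm_num [σx, σy, σz, Matrix.one_fin_two, Matrix.mul_fin_two, Matrix.trace_fin_two_of]
  · rw [show (ω + 1) * ω ^ 2 + (ω + 1) ^ 2 * ω = (1 : GF4) by
      linear_combination (2 * ω + 5) * hω + (4 * ω + 2) * h2, if_neg hone]
    norm_num [σx, σy, σz, Matrix.one_fin_two, Matrix.mul_fin_two, Matrix.trace_fin_two_of,
      Complex.I_mul_I]
  -- a = ω + 1 cases
  · rw [if_pos (by ring)]
    norm_num [σx, σy, σz, Matrix.one_fin_two, Matrix.mul_fin_two, Matrix.trace_fin_two_of,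
      Complex.I_mul_I]
  · rw [show 1 * (ω + 1) ^ 2 + 1 ^ 2 * (ω + 1) = (1 : GF4) by
      linear_combination hω + (2 * ω + 1) * h2, if_neg hone]
    norm_num [σx, σy, σz, Matrix.one_fin_two, Matrix.mul_fin_two, Matrix.trace_fin_two_of,
      Complex.I_mul_I]
  · rw [show ω * (ω + 1) ^ 2 + ω ^ 2 * (ω + 1) = (1 : GF4) by
      linear_combination (2 * ω + 5) * hω + (4 * ω + 2) * h2, if_neg hone]
    norm_num [σx, σy, σz, Matrix.one_fin_two, Matrix.mul_fin_two, Matrix.trace_fin_two_of,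
      Complex.I_mul_I]
  · rw [if_pos (by linear_combination (ω + 1) ^ 3 * h2)]
    norm_num [σx, σy, σz, Matrix.one_fin_two, Matrix.mul_fin_two, Matrix.trace_fin_two_of,
      Complex.I_mul_I]

open scoped Classical in
lemma sign_prod {ι : Type*} (s : Finset ι) (f : ι → GF4) (h : ∀ i, f i = 0 ∨ f i = 1) :
    ((∑ i ∈ s, f i = 0 ∨ ∑ i ∈ s, f i = 1) ∧
      ∏ i ∈ s, (if f i = 0 then (1 : ℂ) else -1) =
        if (∑ i ∈ s, f i) = 0 then 1 else -1) := by
  induction s using Finset.induction_on with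
  | empty => simp
  | @insert a s ha ih =>
    obtain ⟨hmem, hprod⟩ := ih
    rw [Finset.sum_insert ha, Finset.prod_insert ha, hprod]
    rcases h a with hfa | hfa <;> rcases hmem with hs | hs <;> rw [hfa, hs]
    · exact ⟨Or.inl (by norm_num), by norm_num⟩
    · exact ⟨Or.inr (by norm_num), by norm_num⟩
    · exact ⟨Or.inr (by norm_num), by norm_num⟩
    · have h11 : (1 : GF4) + 1 = 0 := by linear_combination gf4_two
      refine ⟨Or.inl h11, ?_⟩
      rw [if_pos h11]
      norm_num

open scoped Classical in
theorem pauli_trace_E1E2E1E2 (ω : GF4) (hω : ω ^ 2 = ω + 1)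
    (n : ℕ) (e₁ e₂ : Fin n → GF4) :
    (tensorProd n (fun i => pauliOf ω (e₁ i)) * tensorProd n (fun i => pauliOf ω (e₂ i)) *
     tensorProd n (fun i => pauliOf ω (e₁ i)) * tensorProd n (fun i => pauliOf ω (e₂ i))).trace =
      (if sympPair e₁ e₂ = 0 then (1 : ℂ) else -1) * 2 ^ n := by
  rw [tensorProd_mul, tensorProd_mul, tensorProd_mul, tensorProd_trace]
  have hq : ∀ i, ((fun i => pauliOf ω (e₁ i) * pauliOf ω (e₂ i) * pauliOf ω (e₁ i) *
      pauliOf ω (e₂ i)) i).trace =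
      (if e₂ i * (e₁ i) ^ 2 + (e₂ i) ^ 2 * e₁ i = 0 then (1 : ℂ) else -1) * 2 := fun i =>
    qubit_trace ω hω (e₁ i) (e₂ i)
  rw [Finset.prod_congr rfl fun i _ => hq i, Finset.prod_mul_distrib, Finset.prod_const,
    Finset.card_univ, Fintype.card_fin]
  congr 1
  have h01 : ∀ i, e₂ i * (e₁ i) ^ 2 + (e₂ i) ^ 2 * e₁ i = 0 ∨
      e₂ i * (e₁ i) ^ 2 + (e₂ i) ^ 2 * e₁ i = 1 := by
    intro i
    set a := e₁ i; set b := e₂ i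
    have hsq : (b * a ^ 2 + b ^ 2 * a) ^ 2 = b * a ^ 2 + b ^ 2 * a := by
      linear_combination b ^ 2 * gf4_pow4 a + a ^ 2 * gf4_pow4 b + (a ^ 3 * b ^ 3) * gf4_two
    have hz : (b * a ^ 2 + b ^ 2 * a) * ((b * a ^ 2 + b ^ 2 * a) - 1) = 0 := by
      linear_combination hsq
    rcases mul_eq_zero.mp hz with h | h
    · exact Or.inl h
    · exact Or.inr (by linear_combination h)
  have hsp := (sign_prod Finset.univ (fun i => e₂ i * (e₁ i) ^ 2 + (e₂ i) ^ 2 * e₁ i) h01).2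
  rw [hsp]
  simp only [sympPair]
  exact if_congr Iff.rfl rfl rfl
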